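/- (Diaconis–Freedman bound recovered) For every k ≥ 2 there exists a constant B_k, depending only on k, with the following property: for every Polish space X, every N ≥ k, and every N-representable k-plan μ_k ∈ 𝒫_{N-rep}(X^k), there exists a Borel probability measure α on 𝒫(X) such that ‖ μ_k − ∫_{𝒫(X)} λ^{⊗k} dα(λ) ‖_TV ≤ B_k / N, where the measure ∫ λ^{⊗k} dα is defined setwise by A ↦ ∫_{𝒫(X)} λ^{⊗k}(A) dα(λ). -/

import Mathlib

open MeasureTheory Filter Topology ENNReal

noncomputable section

namespace FiniteDeFinetti

variable {X : Type*}

/-- The symmetrization `S_N γ := (1/N!) ∑_{σ ∈ S_N} γ^σ` of a measure on `X^N`,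
where `γ^σ` is the pushforward of `γ` under the coordinate permutation induced by `σ`. -/
def symmetrize [MeasurableSpace X] (N : ℕ) (γ : Measure (Fin N → X)) :
    Measure (Fin N → X) :=
  (N.factorial : ℝ≥0∞)⁻¹ • ∑ σ : Equiv.Perm (Fin N), γ.map (fun x i => x (σ i))

/-- The `k`-point marginal `M_k γ` of a measure on `X^N` (projection on the first `k` coords). -/
def marginal [MeasurableSpace X] {k N : ℕ} (h : k ≤ N) (γ : Measure (Fin N → X)) :
    Measure (Fin k → X) :=
  γ.map (fun x i => x (Fin.castLE h i))

/-- `𝒫_sym(X^N)`: symmetric probability measures on `X^N`. -/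
def PsymSet [MeasurableSpace X] (N : ℕ) : Set (Measure (Fin N → X)) :=
  {γ | IsProbabilityMeasure γ ∧ γ = symmetrize N γ}

/-- `𝒫_{N-rep}(X^k)`: the `N`-representable `k`-plans. -/
def NRep [MeasurableSpace X] {k N : ℕ} (h : k ≤ N) : Set (Measure (Fin k → X)) :=
  {μ | ∃ γ : Measure (Fin N → X), γ ∈ PsymSet N ∧ μ = marginal h γ}

/-- Narrow (weak) convergence of a sequence of measures: convergence of integrals of all
bounded continuous functions. -/
def NarrowTendsto {Y : Type*} [MeasurableSpace Y] [TopologicalSpace Y]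
    (μs : ℕ → Measure Y) (μ : Measure Y) : Prop :=
  ∀ φ : BoundedContinuousFunction Y ℝ,
    Tendsto (fun n => ∫ y, φ y ∂(μs n)) atTop (𝓝 (∫ y, φ y ∂μ))

/-- The empirical measure `(1/N) ∑ δ_{x_i}`. -/
def empirical [MeasurableSpace X] (N : ℕ) (x : Fin N → X) : Measure X :=
  (N : ℝ≥0∞)⁻¹ • ∑ i, Measure.dirac (x i)

/-- Extreme point of a convex set of measures. -/
def IsExtremePt {Y : Type*} [MeasurableSpace Y] (C : Set (Measure Y)) (μ : Measure Y) : Prop :=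
  μ ∈ C ∧ ∀ μ1 ∈ C, ∀ μ2 ∈ C, ∀ t : ℝ≥0∞, 0 < t → t < 1 →
    μ = t • μ1 + (1 - t) • μ2 → μ1 = μ ∧ μ2 = μ

/-- The set `E_{N,k}` of marginals of symmetrized Dirac measures. -/
def ENk [MeasurableSpace X] {k N : ℕ} (h : k ≤ N) : Set (Measure (Fin k → X)) :=
  {μ | ∃ x : Fin N → X, μ = marginal h (symmetrize N (Measure.dirac x))}

/-- Borel σ-algebra on the space of probability measures with its narrow topology. -/
instance instMSPM {Y : Type*} [MeasurableSpace Y] [TopologicalSpace Y]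
    [OpensMeasurableSpace Y] : MeasurableSpace (ProbabilityMeasure Y) := borel _

lemma empirical_isProbabilityMeasure [MeasurableSpace X] {N : ℕ} (hN : 0 < N) (x : Fin N → X) :
    IsProbabilityMeasure (empirical N x) := by
  constructor
  simp only [empirical, Measure.smul_apply, smul_eq_mul]
  rw [Measure.finset_sum_apply]
  simp only [measure_univ, Finset.sum_const, Finset.card_univ, Fintype.card_fin, nsmul_eq_mul,
    mul_one]
  exact ENNReal.inv_mul_cancel (by exact_mod_cast hN.ne') (natCast_ne_top N)

/-- The empirical-measure map `Λ : X^N → 𝒫(X)`. -/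
def empPM [MeasurableSpace X] {N : ℕ} (hN : 0 < N) (x : Fin N → X) : ProbabilityMeasure X :=
  ⟨empirical N x, empirical_isProbabilityMeasure hN x⟩

/-- The set `𝒫_{1/N}(X)` of `1/N`-quantized probability measures (as probability measures). -/
def QuantizedPM [MeasurableSpace X] (N : ℕ) : Set (ProbabilityMeasure X) :=
  {lam | ∃ x : Fin N → X, (lam : Measure X) = empirical N x}

open Classical in
/-- The extremal `N`-representable `k`-plan `F_{N,k}(λ)` associated with a `1/N`-quantized
probability measure `λ = (1/N) ∑ δ_{x_i}`, namely `M_k S_N δ_{(x_1,…,x_N)}` (this does not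
depend on the chosen enumeration of the atoms of `λ` counted with multiplicity); junk value
`λ^{⊗k}` for non-quantized `λ`. -/
def FNk [MeasurableSpace X] {k N : ℕ} (h : k ≤ N) (lam : ProbabilityMeasure X) :
    Measure (Fin k → X) :=
  if hx : ∃ x : Fin N → X, (lam : Measure X) = empirical N x then
    marginal h (symmetrize N (Measure.dirac (Classical.choose hx)))
  else Measure.pi fun _ => (lam : Measure X)



section Aux

open Finset
open scoped NNReal


-- extension of injections to a permutation
lemma exists_perm_extend {n : ℕ} {α : Type*} [Fintype α] [DecidableEq α] {c j : Fin n → α}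
    (hc : Function.Injective c) (hj : Function.Injective j) :
    ∃ σ : Equiv.Perm α, ∀ i, σ (c i) = j i := by
  classical
  let e1 : Set.range c ≃ Set.range j :=
    (Equiv.ofInjective c hc).symm.trans (Equiv.ofInjective j hj)
  have hcard : Fintype.card ((Set.range c)ᶜ : Set α) = Fintype.card ((Set.range j)ᶜ : Set α) := by
    rw [Fintype.card_compl_set, Fintype.card_compl_set,
      Set.card_range_of_injective hc, Set.card_range_of_injective hj]
  let e2 : ((Set.range c)ᶜ : Set α) ≃ ((Set.range j)ᶜ : Set α) := Fintype.equivOfCardEq hcard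
  refine ⟨(Equiv.Set.sumCompl (Set.range c)).symm.trans
    ((e1.sumCongr e2).trans (Equiv.Set.sumCompl (Set.range j))), ?_⟩
  intro i
  have hmem : c i ∈ Set.range c := ⟨i, rfl⟩
  simp only [Equiv.trans_apply, Equiv.Set.sumCompl_symm_apply_of_mem hmem, Equiv.sumCongr_apply,
    Sum.map_inl, Equiv.Set.sumCompl_apply_inl]
  have : e1 ⟨c i, hmem⟩ = ⟨j i, ⟨i, rfl⟩⟩ := by
    simp only [e1, Equiv.trans_apply]
    have : (Equiv.ofInjective c hc).symm ⟨c i, hmem⟩ = i := by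
      apply hc
      rw [← Equiv.ofInjective_apply c hc, Equiv.symm_apply_apply]
    rw [this]
    rfl
  rw [this]

lemma card_fixing (k N : ℕ) (h : k ≤ N) :
    (univ.filter fun τ : Equiv.Perm (Fin N) =>
      ∀ i : Fin k, τ (Fin.castLE h i) = Fin.castLE h i).card = (N - k).factorial := by
  classical
  rw [← Fintype.card_subtype]
  have e4 : {τ : Equiv.Perm (Fin N) // ∀ i : Fin k, τ (Fin.castLE h i) = Fin.castLE h i}
      ≃ {f : Equiv.Perm (Fin N) // ∀ a : Fin N, ¬ k ≤ (a : ℕ) → f a = a} := by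
    apply Equiv.subtypeEquivRight
    intro f
    constructor
    · intro hf a ha
      have hak : (a : ℕ) < k := by omega
      have : a = Fin.castLE h ⟨(a : ℕ), hak⟩ := by ext; rfl
      rw [this, hf]
    · intro hf i
      exact hf _ (by simp only [Fin.coe_castLE]; omega)
  have e5 : {f : Equiv.Perm (Fin N) // ∀ a : Fin N, ¬ k ≤ (a : ℕ) → f a = a}
      ≃ Equiv.Perm {a : Fin N // k ≤ (a : ℕ)} :=
    (Equiv.Perm.subtypeEquivSubtypePerm (fun a : Fin N => k ≤ (a : ℕ))).symm
  have e6 : {a : Fin N // k ≤ (a : ℕ)} ≃ Fin (N - k) :=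
    { toFun := fun a => ⟨(a : Fin N) - k, by omega⟩
      invFun := fun i => ⟨⟨(i : ℕ) + k, by omega⟩, by simp⟩
      left_inv := by
        intro a
        ext
        simp only []
        omega
      right_inv := by
        intro i
        ext
        simp only []
        omega }
  rw [Fintype.card_congr (e4.trans e5), Fintype.card_perm, Fintype.card_congr e6,
    Fintype.card_fin]

lemma fiber_card {k N : ℕ} (h : k ≤ N) {j : Fin k → Fin N} (hj : Function.Injective j) :
    (univ.filter fun σ : Equiv.Perm (Fin N) =>
      (fun i => σ (Fin.castLE h i)) = j).card = (N - k).factorial := by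
  classical
  obtain ⟨σ0, hσ0⟩ := exists_perm_extend (Fin.castLE_injective h) hj
  rw [← card_fixing k N h]
  apply Finset.card_bij' (fun σ _ => σ0⁻¹ * σ) (fun τ _ => σ0 * τ)
  · intro σ hσ
    simp only [mem_filter, mem_univ, true_and] at hσ ⊢
    intro i
    have : σ (Fin.castLE h i) = j i := congrFun hσ i
    rw [Equiv.Perm.mul_apply, this, ← hσ0 i, Equiv.Perm.inv_def, Equiv.symm_apply_apply]
  · intro τ hτ
    simp only [mem_filter, mem_univ, true_and] at hτ ⊢
    funext i
    rw [Equiv.Perm.mul_apply, hτ i, hσ0 i]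
  · intro σ _; group
  · intro τ _; group

lemma sum_perm_comp {k N : ℕ} (h : k ≤ N) {M : Type*} [AddCommMonoid M]
    (F : (Fin k → Fin N) → M) :
    ∑ σ : Equiv.Perm (Fin N), F (fun i => σ (Fin.castLE h i)) =
      (N - k).factorial •
        ∑ j ∈ univ.filter (fun j : Fin k → Fin N => Function.Injective j), F j := by
  classical
  rw [Finset.sum_comp F (fun σ : Equiv.Perm (Fin N) => fun i => σ (Fin.castLE h i))]
  have himg : univ.image (fun σ : Equiv.Perm (Fin N) => fun i => σ (Fin.castLE h i)) =
      univ.filter (fun j : Fin k → Fin N => Function.Injective j) := by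
    ext j
    simp only [mem_image, mem_univ, true_and, mem_filter]
    constructor
    · rintro ⟨σ, rfl⟩
      exact σ.injective.comp (Fin.castLE_injective h)
    · intro hj
      obtain ⟨σ, hσ⟩ := exists_perm_extend (Fin.castLE_injective h) hj
      exact ⟨σ, funext hσ⟩
  rw [himg, Finset.smul_sum]
  apply Finset.sum_congr rfl
  intro j hj
  rw [fiber_card h (by simpa using hj)]

lemma card_inj_eq {k N : ℕ} (h : k ≤ N) :
    (univ.filter (fun j : Fin k → Fin N => Function.Injective j)).card = N.descFactorial k := by
  classical
  have h1 := sum_perm_comp h (fun _ : Fin k → Fin N => (1 : ℕ))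
  simp only [Finset.sum_const, smul_eq_mul, mul_one, card_univ, Fintype.card_perm,
    Fintype.card_fin] at h1
  have h2 : (N - k).factorial * N.descFactorial k = N.factorial :=
    Nat.factorial_mul_descFactorial h
  have h3 : (N - k).factorial * (univ.filter
      (fun j : Fin k → Fin N => Function.Injective j)).card = N.factorial := by
    exact h1.symm
  exact Nat.eq_of_mul_eq_mul_left (Nat.factorial_pos _) (h3.trans h2.symm)

lemma pow_sub_desc_bound (N : ℕ) :
    ∀ k : ℕ, k ≤ N → ((N : ℝ) ^ k - (N.descFactorial k : ℝ)) * N ≤ (k * k : ℝ) * N ^ k := by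
  intro k
  induction k with
  | zero => simp
  | succ k ih =>
    intro hkN
    have hk : k ≤ N := by omega
    have ihk := ih hk
    have hd : (N.descFactorial k : ℝ) ≤ (N : ℝ) ^ k := by
      exact_mod_cast Nat.descFactorial_le_pow N k
    have hd0 : (0 : ℝ) ≤ (N.descFactorial k : ℝ) := by positivity
    have hN0 : (0 : ℝ) ≤ (N : ℝ) := by positivity
    have hkN' : (k : ℝ) ≤ (N : ℝ) := by exact_mod_cast hk
    have hcast : ((N.descFactorial (k+1) : ℕ) : ℝ) = ((N : ℝ) - k) * N.descFactorial k := by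
      rw [Nat.descFactorial_succ]
      push_cast [Nat.cast_sub hk]
      ring
    rw [hcast]
    have hPk : (0:ℝ) ≤ (N:ℝ)^k := by positivity
    have expand : ((N:ℝ) ^ (k+1) - ((N:ℝ) - k) * (N.descFactorial k : ℝ)) * N
        = ((N:ℝ)^k - (N.descFactorial k : ℝ)) * N * N + k * (N.descFactorial k : ℝ) * N := by
      ring
    rw [expand]
    have hb1 : ((N:ℝ)^k - (N.descFactorial k : ℝ)) * N * N ≤ (k * k : ℝ) * N^k * N :=
      mul_le_mul_of_nonneg_right ihk hN0
    have hb2 : (k : ℝ) * (N.descFactorial k : ℝ) * N ≤ k * (N:ℝ)^k * N := by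
      apply mul_le_mul_of_nonneg_right _ hN0
      apply mul_le_mul_of_nonneg_left hd (by positivity)
    have : ((k:ℕ)+1 : ℝ) * ((k:ℕ)+1) * (N:ℝ)^(k+1) = (k*k + 2*k + 1 : ℝ) * ((N:ℝ)^k * N) := by
      ring
    push_cast
    rw [this]
    nlinarith [mul_nonneg (mul_nonneg (Nat.cast_nonneg k : (0:ℝ) ≤ k) hPk) hN0,
      mul_nonneg hPk hN0]

lemma weights_bound {k N : ℕ} (h : k ≤ N) (hN : 0 < N) (t : (Fin k → Fin N) → ℝ)
    (ht0 : ∀ j, 0 ≤ t j) (ht1 : ∀ j, t j ≤ 1) :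
    |((N.factorial : ℝ))⁻¹ * (((N - k).factorial : ℝ) *
        ∑ j ∈ univ.filter (fun j : Fin k → Fin N => Function.Injective j), t j)
      - ((N : ℝ) ^ k)⁻¹ * ∑ j, t j| ≤ 2 * k * k / N := by
  classical
  set I := univ.filter (fun j : Fin k → Fin N => Function.Injective j) with hI
  set O := univ.filter (fun j : Fin k → Fin N => ¬ Function.Injective j) with hO
  have hd0 : 0 < (N.descFactorial k : ℝ) := by
    have : N.descFactorial k ≠ 0 := by
      rw [Ne, Nat.descFactorial_eq_zero_iff_lt]; omega
    exact_mod_cast Nat.pos_of_ne_zero this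
  set d : ℝ := (N.descFactorial k : ℝ) with hdd
  set P : ℝ := (N : ℝ) ^ k with hPP
  have hP0 : 0 < P := by positivity
  have hdP : d ≤ P := by rw [hdd, hPP]; exact_mod_cast Nat.descFactorial_le_pow N k
  have hfac : (N.factorial : ℝ) = ((N - k).factorial : ℝ) * d := by
    rw [hdd]; exact_mod_cast (Nat.factorial_mul_descFactorial h).symm
  have hf0 : (0:ℝ) < ((N - k).factorial : ℝ) := by exact_mod_cast Nat.factorial_pos _
  have hsimp : (N.factorial : ℝ)⁻¹ * (((N - k).factorial : ℝ) * ∑ j ∈ I, t j)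
      = d⁻¹ * ∑ j ∈ I, t j := by
    rw [hfac, mul_inv]
    field_simp
  have hsplit : ∑ j, t j = ∑ j ∈ I, t j + ∑ j ∈ O, t j := by
    rw [hI, hO]
    exact (Finset.sum_filter_add_sum_filter_not univ _ t).symm
  have hcardI : (I.card : ℝ) = d := by rw [hdd]; exact_mod_cast card_inj_eq h
  have hSI0 : 0 ≤ ∑ j ∈ I, t j := Finset.sum_nonneg fun j _ => ht0 j
  have hSO0 : 0 ≤ ∑ j ∈ O, t j := Finset.sum_nonneg fun j _ => ht0 j
  have hSI : ∑ j ∈ I, t j ≤ d := by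
    calc ∑ j ∈ I, t j ≤ ∑ j ∈ I, 1 := Finset.sum_le_sum fun j _ => ht1 j
    _ = (I.card : ℝ) := by simp
    _ = d := hcardI
  have hcards : (I.card : ℕ) + O.card = N ^ k := by
    rw [hI, hO]
    rw [Finset.card_filter_add_card_filter_not]
    simp [Fintype.card_fun]
  have hSO : ∑ j ∈ O, t j ≤ P - d := by
    calc ∑ j ∈ O, t j ≤ ∑ j ∈ O, 1 := Finset.sum_le_sum fun j _ => ht1 j
    _ = (O.card : ℝ) := by simp
    _ = P - d := by
        rw [hPP, hdd]
        have : (O.card : ℕ) = N ^ k - N.descFactorial k := by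
          rw [← card_inj_eq h, ← hI]; omega
        rw [this]
        push_cast [Nat.cast_sub (Nat.descFactorial_le_pow N k)]
        ring
  have hinv : d⁻¹ ≥ P⁻¹ := by
    apply inv_anti₀ hd0 hdP
  rw [hsimp, hsplit]
  have key : d⁻¹ * ∑ j ∈ I, t j - P⁻¹ * (∑ j ∈ I, t j + ∑ j ∈ O, t j)
      = (d⁻¹ - P⁻¹) * ∑ j ∈ I, t j - P⁻¹ * ∑ j ∈ O, t j := by ring
  rw [key]
  have hb1 : (d⁻¹ - P⁻¹) * ∑ j ∈ I, t j ≤ (d⁻¹ - P⁻¹) * d :=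
    mul_le_mul_of_nonneg_left hSI (by linarith)
  have hb2 : P⁻¹ * ∑ j ∈ O, t j ≤ P⁻¹ * (P - d) :=
    mul_le_mul_of_nonneg_left hSO (by positivity)
  have hlow : -(P⁻¹ * (P - d)) ≤ (d⁻¹ - P⁻¹) * ∑ j ∈ I, t j - P⁻¹ * ∑ j ∈ O, t j := by
    have h1 : 0 ≤ (d⁻¹ - P⁻¹) * ∑ j ∈ I, t j := mul_nonneg (by linarith) hSI0
    linarith
  have hhigh : (d⁻¹ - P⁻¹) * ∑ j ∈ I, t j - P⁻¹ * ∑ j ∈ O, t j ≤ (d⁻¹ - P⁻¹) * d := by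
    have h2 : 0 ≤ P⁻¹ * ∑ j ∈ O, t j := mul_nonneg (by positivity) hSO0
    linarith
  have hM : |(d⁻¹ - P⁻¹) * ∑ j ∈ I, t j - P⁻¹ * ∑ j ∈ O, t j|
      ≤ (d⁻¹ - P⁻¹) * d + P⁻¹ * (P - d) := by
    rw [abs_le]
    constructor
    · have : 0 ≤ (d⁻¹ - P⁻¹) * d := mul_nonneg (by linarith) (le_of_lt hd0)
      linarith
    · have : 0 ≤ P⁻¹ * (P - d) := mul_nonneg (by positivity) (by linarith)
      linarith
  refine hM.trans ?_
  have hval : (d⁻¹ - P⁻¹) * d + P⁻¹ * (P - d) = 2 * (P - d) / P := by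
    field_simp
    ring
  rw [hval]
  have hkey : (P - d) * N ≤ (k * k : ℝ) * P := by
    rw [hPP, hdd]
    exact pow_sub_desc_bound N k h
  have hN0 : (0:ℝ) < N := by exact_mod_cast hN
  rw [div_le_div_iff₀ hP0 hN0]
  nlinarith


variable [MeasurableSpace X] [TopologicalSpace X] [OpensMeasurableSpace X]

instance : BorelSpace (ProbabilityMeasure X) := ⟨rfl⟩

lemma measurable_lintegral_bcnn (f : BoundedContinuousFunction X NNReal) :
    Measurable fun lam : ProbabilityMeasure X => ∫⁻ x, (f x : ℝ≥0∞) ∂(lam : Measure X) := by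
  have heq : (fun lam : ProbabilityMeasure X => ∫⁻ x, (f x : ℝ≥0∞) ∂(lam : Measure X))
      = fun lam : ProbabilityMeasure X => ((lam.toFiniteMeasure.testAgainstNN f : ℝ≥0) : ℝ≥0∞) := by
    funext lam
    rw [FiniteMeasure.testAgainstNN_coe_eq]
    rfl
  rw [heq]
  exact (ENNReal.continuous_coe.comp
    (ProbabilityMeasure.continuous_testAgainstNN_eval f)).measurable

lemma measurable_eval [HasOuterApproxClosed X] [BorelSpace X] {B : Set X}
    (hB : MeasurableSet B) :
    Measurable fun lam : ProbabilityMeasure X => (lam : Measure X) B := by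
  have h_eq : (inferInstance : MeasurableSpace X)
      = MeasurableSpace.generateFrom {s : Set X | IsClosed s} := by
    rw [BorelSpace.measurable_eq (α := X), borel_eq_generateFrom_isClosed]
  have h_inter : IsPiSystem {s : Set X | IsClosed s} := fun s hs t ht _ => hs.inter ht
  refine MeasurableSpace.induction_on_inter
    (C := fun B _ => Measurable fun lam : ProbabilityMeasure X => (lam : Measure X) B)
    h_eq h_inter ?_ ?_ ?_ ?_ _ hB
  · simp only [measure_empty]
    exact measurable_const
  · intro F hF
    have hF' : IsClosed F := hF
    have tends : ∀ lam : ProbabilityMeasure X,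
        Tendsto (fun n => ∫⁻ x, (hF'.apprSeq n x : ℝ≥0∞) ∂(lam : Measure X)) atTop
          (𝓝 ((lam : Measure X) F)) := fun lam =>
      HasOuterApproxClosed.tendsto_lintegral_apprSeq hF' (lam : Measure X)
    exact ENNReal.measurable_of_tendsto' atTop
      (fun n => measurable_lintegral_bcnn (hF'.apprSeq n))
      (tendsto_pi_nhds.2 tends)
  · intro B hBm hBmeas
    have : (fun lam : ProbabilityMeasure X => (lam : Measure X) Bᶜ)
        = fun lam : ProbabilityMeasure X => 1 - (lam : Measure X) B := by
      funext lam
      exact prob_compl_eq_one_sub hBm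
    rw [this]
    exact Measurable.const_sub hBmeas 1
  · intro g hdisj hgm hgmeas
    have : (fun lam : ProbabilityMeasure X => (lam : Measure X) (⋃ n, g n))
        = fun lam : ProbabilityMeasure X => ∑' n, (lam : Measure X) (g n) := by
      funext lam
      exact measure_iUnion hdisj hgm
    rw [this]
    exact Measurable.ennreal_tsum hgmeas

lemma measurable_pi_eval [HasOuterApproxClosed X] [BorelSpace X] (k : ℕ)
    {A : Set (Fin k → X)} (hA : MeasurableSet A) :
    Measurable fun lam : ProbabilityMeasure X =>
      Measure.pi (fun _ : Fin k => (lam : Measure X)) A := by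
  have h_eq : (inferInstance : MeasurableSpace (Fin k → X)) =
      MeasurableSpace.generateFrom
        (Set.pi Set.univ '' Set.pi Set.univ fun _ : Fin k => {s : Set X | MeasurableSet s}) :=
    generateFrom_pi.symm
  refine MeasurableSpace.induction_on_inter
    (C := fun A _ => Measurable fun lam : ProbabilityMeasure X =>
      Measure.pi (fun _ : Fin k => (lam : Measure X)) A)
    h_eq isPiSystem_pi ?_ ?_ ?_ ?_ _ hA
  · simp only [measure_empty]
    exact measurable_const
  · rintro _ ⟨s, hs, rfl⟩
    rw [Set.mem_univ_pi] at hs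
    have : (fun lam : ProbabilityMeasure X =>
        Measure.pi (fun _ : Fin k => (lam : Measure X)) (Set.pi Set.univ s))
        = fun lam : ProbabilityMeasure X => ∏ i : Fin k, (lam : Measure X) (s i) := by
      funext lam
      exact Measure.pi_pi _ s
    rw [this]
    exact Finset.measurable_prod _ fun i _ => measurable_eval (hs i)
  · intro B hBm hBmeas
    have : (fun lam : ProbabilityMeasure X =>
        Measure.pi (fun _ : Fin k => (lam : Measure X)) Bᶜ)
        = fun lam : ProbabilityMeasure X => 1 - Measure.pi (fun _ : Fin k => (lam : Measure X)) B := by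
      funext lam
      exact prob_compl_eq_one_sub hBm
    rw [this]
    exact Measurable.const_sub hBmeas 1
  · intro g hdisj hgm hgmeas
    have : (fun lam : ProbabilityMeasure X =>
        Measure.pi (fun _ : Fin k => (lam : Measure X)) (⋃ n, g n))
        = fun lam : ProbabilityMeasure X => ∑' n, Measure.pi (fun _ : Fin k => (lam : Measure X)) (g n) := by
      funext lam
      exact measure_iUnion hdisj hgm
    rw [this]
    exact Measurable.ennreal_tsum hgmeas

lemma lintegral_empirical [BorelSpace X] {N : ℕ} (x : Fin N → X) {f : X → ℝ≥0∞}
    (hf : Measurable f) :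
    ∫⁻ y, f y ∂(empirical N x) = (N : ℝ≥0∞)⁻¹ * ∑ i, f (x i) := by
  rw [empirical, lintegral_smul_measure, lintegral_finset_sum_measure]
  simp_rw [lintegral_dirac' _ hf, smul_eq_mul]

lemma continuous_empPM [BorelSpace X] {N : ℕ} (hN : 0 < N) :
    Continuous (empPM (X := X) hN) := by
  apply continuous_induced_rng.2
  apply continuous_induced_rng.2
  apply WeakDual.continuous_of_continuous_eval
  intro f
  have key : (fun x : Fin N → X =>
      ((FiniteMeasure.toWeakDualBCNN ∘ ProbabilityMeasure.toFiniteMeasure ∘ empPM hN) x) f)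
      = fun x : Fin N → X => (N : ℝ≥0)⁻¹ * ∑ i, f (x i) := by
    funext x
    simp only [Function.comp_apply]
    rw [FiniteMeasure.toWeakDualBCNN_apply]
    show (∫⁻ y, (f y : ℝ≥0∞) ∂((empPM hN x).toFiniteMeasure : Measure X)).toNNReal = _
    have : (∫⁻ y, (f y : ℝ≥0∞) ∂((empPM hN x).toFiniteMeasure : Measure X))
        = (N : ℝ≥0∞)⁻¹ * ∑ i, (f (x i) : ℝ≥0∞) := by
      exact lintegral_empirical x (measurable_coe_nnreal_ennreal.comp f.continuous.measurable)
    rw [this]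
    have hcast : ((N : ℝ≥0∞))⁻¹ * ∑ i, ((f (x i) : ℝ≥0) : ℝ≥0∞)
        = (((N : ℝ≥0)⁻¹ * ∑ i, f (x i) : ℝ≥0) : ℝ≥0∞) := by
      push_cast
      rw [ENNReal.coe_inv (by exact_mod_cast hN.ne')]
      norm_cast
    rw [hcast, ENNReal.toNNReal_coe]
  rw [key]
  exact Continuous.mul continuous_const (continuous_finset_sum _ fun i _ =>
    f.continuous.comp (continuous_apply i))

lemma pi_empirical [BorelSpace X] {N : ℕ} (hN : 0 < N) (k : ℕ) (x : Fin N → X) :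
    Measure.pi (fun _ : Fin k => empirical N x) =
      ((N : ℝ≥0∞) ^ k)⁻¹ • ∑ j : Fin k → Fin N, Measure.dirac (fun i => x (j i)) := by
  haveI : ∀ i : Fin k, IsProbabilityMeasure ((fun _ : Fin k => empirical N x) i) :=
    fun _ => empirical_isProbabilityMeasure hN x
  refine Measure.pi_eq ?_
  intro s hs
  have hps : MeasurableSet (Set.pi Set.univ s) := MeasurableSet.univ_pi hs
  rw [Measure.smul_apply, Measure.finset_sum_apply]
  have hval : ∀ j : Fin k → Fin N,
      Measure.dirac (fun i => x (j i)) (Set.pi Set.univ s)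
        = ∏ i : Fin k, ((s i).indicator (fun _ => (1:ℝ≥0∞)) (x (j i))) := by
    intro j
    rw [Measure.dirac_apply' _ hps]
    by_cases hmem : (fun i => x (j i)) ∈ Set.pi Set.univ s
    · rw [Set.indicator_of_mem hmem]
      rw [Set.mem_univ_pi] at hmem
      exact (Finset.prod_eq_one fun i _ => Set.indicator_of_mem (hmem i) _).symm
    · rw [Set.indicator_of_notMem hmem]
      rw [Set.mem_univ_pi] at hmem
      push_neg at hmem
      obtain ⟨i, hi⟩ := hmem
      exact (Finset.prod_eq_zero (Finset.mem_univ i)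
        (by rw [Set.indicator_of_notMem hi])).symm
  simp_rw [hval]
  have hemp : ∀ i : Fin k, empirical N x (s i)
      = (N : ℝ≥0∞)⁻¹ * ∑ m : Fin N, (s i).indicator (fun _ => (1:ℝ≥0∞)) (x m) := by
    intro i
    rw [empirical, Measure.smul_apply, Measure.finset_sum_apply]
    simp_rw [Measure.dirac_apply' _ (hs i)]
    rfl
  simp_rw [hemp]
  rw [Finset.prod_mul_distrib, Finset.prod_const, Finset.card_univ, Fintype.card_fin,
    Fintype.prod_sum, smul_eq_mul, ENNReal.inv_pow]

end Aux

/-- Diaconis–Freedman bound recovered. For every `k ≥ 2` there is a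
constant `B_k`, depending only on `k`, such that for every Polish space `X`, every `N ≥ k`
and every `N`-representable `k`-plan `μ_k`, there is a Borel probability measure `α` on
`𝒫(X)` with `‖μ_k − ∫ λ^{⊗k} dα(λ)‖_TV ≤ B_k/N` (TV distance as the supremum over Borel
sets of the discrepancy). -/
theorem diaconis_freedman
    (k : ℕ) (hk : 2 ≤ k) :
    ∃ B : ℝ, ∀ (X : Type) [MeasurableSpace X] [TopologicalSpace X] [PolishSpace X]
      [BorelSpace X] (N : ℕ) (hkN : k ≤ N) (μk : Measure (Fin k → X)),
      μk ∈ NRep (X := X) hkN →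
        ∃ α : Measure (ProbabilityMeasure X), IsProbabilityMeasure α ∧
          ∀ A : Set (Fin k → X), MeasurableSet A →
            |(μk A).toReal -
                ∫ lam : ProbabilityMeasure X,
                  ((Measure.pi fun _ : Fin k => (lam : Measure X)) A).toReal ∂α|
              ≤ B / (N : ℝ) := by
  classical
  refine ⟨(2 * k * k : ℝ), ?_⟩
  intro X mX tX pX bX N hkN μk hμk
  obtain ⟨γ, ⟨hγp, hγs⟩, hμγ⟩ := hμk
  haveI : IsProbabilityMeasure γ := hγp
  have hN : 0 < N := lt_of_lt_of_le (by omega) hkN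
  have hΛm : Measurable (empPM (X := X) hN) := (continuous_empPM hN).measurable
  refine ⟨γ.map (empPM (X := X) hN), Measure.isProbabilityMeasure_map hΛm.aemeasurable, ?_⟩
  intro A hA
  set F : (Fin k → Fin N) → (Fin N → X) → (Fin k → X) := fun j x i => x (j i) with hFdef
  have hFm : ∀ j, Measurable (F j) := fun j =>
    measurable_pi_lambda _ fun i => measurable_pi_apply _
  set t : (Fin k → Fin N) → ℝ := fun j => (γ ((F j) ⁻¹' A)).toReal with htdef
  have ht0 : ∀ j, 0 ≤ t j := fun j => ENNReal.toReal_nonneg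
  have ht1 : ∀ j, t j ≤ 1 := by
    intro j
    have h1 : γ ((F j) ⁻¹' A) ≤ 1 := prob_le_one
    have := ENNReal.toReal_mono ENNReal.one_ne_top h1
    simpa using this
  -- the integral side
  have hgm : Measurable fun lam : ProbabilityMeasure X =>
      ((Measure.pi fun _ : Fin k => (lam : Measure X)) A).toReal :=
    (measurable_pi_eval k hA).ennreal_toReal
  rw [MeasureTheory.integral_map hΛm.aemeasurable hgm.aestronglyMeasurable]
  set ind : (Fin k → Fin N) → (Fin N → X) → ℝ :=
    fun j => Set.indicator ((F j) ⁻¹' A) (fun _ => (1 : ℝ)) with hinddef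
  have hx : ∀ x : Fin N → X,
      ((Measure.pi fun _ : Fin k => ((empPM (X := X) hN x : ProbabilityMeasure X) :
        Measure X)) A).toReal
      = ((N : ℝ) ^ k)⁻¹ * ∑ j : Fin k → Fin N, ind j x := by
    intro x
    have hco : ((empPM (X := X) hN x : ProbabilityMeasure X) : Measure X)
        = empirical N x := rfl
    rw [hco, pi_empirical hN k x, Measure.smul_apply, Measure.finset_sum_apply, smul_eq_mul,
      ENNReal.toReal_mul]
    congr 1
    · simp [ENNReal.toReal_inv, ENNReal.toReal_pow]
    · rw [ENNReal.toReal_sum (fun j _ => measure_ne_top _ _)]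
      apply Finset.sum_congr rfl
      intro j _
      rw [Measure.dirac_apply' _ hA]
      simp only [hinddef]
      by_cases hmem : F j x ∈ A
      · rw [Set.indicator_of_mem (show (fun i => x (j i)) ∈ A from hmem),
          Set.indicator_of_mem (show x ∈ F j ⁻¹' A from hmem)]
        simp
      · rw [Set.indicator_of_notMem (show (fun i => x (j i)) ∉ A from hmem),
          Set.indicator_of_notMem (show x ∉ F j ⁻¹' A from hmem)]
        simp
  have hint : ∫ x, ((Measure.pi fun _ : Fin k =>
      ((empPM (X := X) hN x : ProbabilityMeasure X) : Measure X)) A).toReal ∂γ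
      = ((N : ℝ) ^ k)⁻¹ * ∑ j : Fin k → Fin N, t j := by
    rw [show (fun x => ((Measure.pi fun _ : Fin k =>
        ((empPM (X := X) hN x : ProbabilityMeasure X) : Measure X)) A).toReal)
      = fun x => ((N : ℝ) ^ k)⁻¹ * ∑ j : Fin k → Fin N, ind j x from funext hx]
    rw [MeasureTheory.integral_const_mul]
    congr 1
    rw [MeasureTheory.integral_finset_sum _ (fun j _ =>
      (integrable_const (1 : ℝ)).indicator (hFm j hA))]
    apply Finset.sum_congr rfl
    intro j _
    show ∫ x, ((F j ⁻¹' A).indicator (fun _ => (1 : ℝ))) x ∂γ = t j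
    rw [MeasureTheory.integral_indicator_const (1 : ℝ) (hFm j hA)]
    show (γ (F j ⁻¹' A)).toReal • (1 : ℝ) = t j
    rw [smul_eq_mul, mul_one]
  -- the marginal side
  have hp : Measurable (fun x : Fin N → X => fun i : Fin k => x (Fin.castLE hkN i)) :=
    measurable_pi_lambda _ fun i => measurable_pi_apply _
  have hmσ : ∀ σ : Equiv.Perm (Fin N), Measurable (fun x : Fin N → X => fun i => x (σ i)) :=
    fun σ => measurable_pi_lambda _ fun i => measurable_pi_apply _
  have h1 : μk A = (N.factorial : ℝ≥0∞)⁻¹ *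
      ∑ σ : Equiv.Perm (Fin N), γ ((F fun i => σ (Fin.castLE hkN i)) ⁻¹' A) := by
    rw [hμγ, marginal, Measure.map_apply hp hA]
    conv_lhs => rw [hγs]
    rw [symmetrize, Measure.smul_apply, Measure.finset_sum_apply, smul_eq_mul]
    congr 1
    apply Finset.sum_congr rfl
    intro σ _
    rw [Measure.map_apply (hmσ σ) (hp hA)]
    rfl
  have h2 : (μk A).toReal = (N.factorial : ℝ)⁻¹ * (((N - k).factorial : ℝ) *
      ∑ j ∈ Finset.univ.filter (fun j : Fin k → Fin N => Function.Injective j), t j) := by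
    rw [h1, ENNReal.toReal_mul, ENNReal.toReal_inv,
      ENNReal.toReal_sum (fun σ _ => measure_ne_top _ _)]
    simp only [ENNReal.toReal_natCast]
    congr 1
    have := sum_perm_comp hkN t
    rw [nsmul_eq_mul] at this
    rw [← this]
  rw [h2, hint]
  exact weights_bound hkN hN t ht0 ht1

end FiniteDeFinetti
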